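/- Let θ ∈ (0,1), α₂ > 0 and t ∈ ℝ. Set σ₁ := θ⁻¹·(I₃ + E(t·e₃)) and σ₂ := α₂·I₃ + E(t·e₃), and let D := 1 − θ + θ²α₂. Then there exists a unique pair of vectors μ₁, μ₂ ∈ ℝ³ such that, setting Pᵢ := I₃ + e₁·μᵢᵀ (i = 1,2), one has θ·P₁ + (1−θ)·P₂ = I₃ and e₁ᵀ·σ₁·P₁ = e₁ᵀ·σ₂·P₂. This pair is given explicitly by P₁ = I₃ + ((1−θ)/D)·B and P₂ = I₃ − (θ/D)·B, where B is the 3×3 matrix whose first row is (θα₂ − 1, (1−θ)t, 0) and whose other entries vanish. Moreover the effective conductivity σ_* := θ·σ₁·P₁ + (1−θ)·σ₂·P₂ equals the matrix with entries σ_*[1,1] = α₂/D, σ_*[1,2] = −(1−θ+θα₂)·t/D, σ_*[2,1] = (1−θ+θα₂)·t/D, σ_*[2,2] = 1 + (1−θ)α₂ + (1−θ)³t²/D, σ_*[3,3] = 1 + (1−θ)α₂, and all other entries zero. -/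

import Mathlib

set_option maxHeartbeats 2000000


open Matrix

/-- The antisymmetric matrix of the cross product: `crossMat η *ᵥ w = η ×₃ w`. -/
noncomputable def crossMat (η : Fin 3 → ℝ) : Matrix (Fin 3) (Fin 3) ℝ :=
  !![0, -η 2, η 1; η 2, 0, -η 0; -η 1, η 0, 0]

/-- Corrector and effective conductivity of the rank-one laminate mixing
`σ₁ = θ⁻¹ (I₃ + E(t e₃))` and `σ₂ = α₂ I₃ + E(t e₃)` in proportions `θ`, `1−θ`
in the direction `e₁`: there is a unique pair of vectors `μ₁, μ₂` such that the
matrices `Pᵢ = I₃ + e₁ μᵢᵀ` have average `I₃` and matching normal fluxes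
`e₁ᵀ σ₁ P₁ = e₁ᵀ σ₂ P₂`; this pair is given by `P₁ = I₃ + ((1−θ)/D) B`,
`P₂ = I₃ − (θ/D) B`, and the effective conductivity
`σ_* = θ σ₁ P₁ + (1−θ) σ₂ P₂` has the announced explicit form. -/
theorem rankOneLaminate_corrector_and_effective (θ α₂ t : ℝ)
    (hθ : θ ∈ Set.Ioo (0 : ℝ) 1) (hα₂ : 0 < α₂) :
    let e1 : Fin 3 → ℝ := ![1, 0, 0]
    let e3 : Fin 3 → ℝ := ![0, 0, 1]
    let σ1 : Matrix (Fin 3) (Fin 3) ℝ := θ⁻¹ • (1 + crossMat (t • e3))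
    let σ2 : Matrix (Fin 3) (Fin 3) ℝ :=
      α₂ • (1 : Matrix (Fin 3) (Fin 3) ℝ) + crossMat (t • e3)
    let D : ℝ := 1 - θ + θ ^ 2 * α₂
    let B : Matrix (Fin 3) (Fin 3) ℝ := !![θ * α₂ - 1, (1 - θ) * t, 0; 0, 0, 0; 0, 0, 0]
    let Pmat : (Fin 3 → ℝ) → Matrix (Fin 3) (Fin 3) ℝ := fun μ => 1 + vecMulVec e1 μ
    let Cond : (Fin 3 → ℝ) × (Fin 3 → ℝ) → Prop := fun μ =>
      θ • Pmat μ.1 + (1 - θ) • Pmat μ.2 = 1 ∧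
        Matrix.vecMul e1 (σ1 * Pmat μ.1) = Matrix.vecMul e1 (σ2 * Pmat μ.2)
    let μ1 : Fin 3 → ℝ := ((1 - θ) / D) • ![θ * α₂ - 1, (1 - θ) * t, 0]
    let μ2 : Fin 3 → ℝ := -(θ / D) • ![θ * α₂ - 1, (1 - θ) * t, 0]
    (∃! μ : (Fin 3 → ℝ) × (Fin 3 → ℝ), Cond μ) ∧
      Cond (μ1, μ2) ∧
      Pmat μ1 = 1 + ((1 - θ) / D) • B ∧
      Pmat μ2 = 1 - (θ / D) • B ∧
      θ • (σ1 * Pmat μ1) + (1 - θ) • (σ2 * Pmat μ2) =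
        !![α₂ / D, -((1 - θ + θ * α₂) * t) / D, 0;
           ((1 - θ + θ * α₂) * t) / D, 1 + (1 - θ) * α₂ + (1 - θ) ^ 3 * t ^ 2 / D, 0;
           0, 0, 1 + (1 - θ) * α₂] := by
  intro e1 e3 σ1 σ2 D B Pmat Cond μ1 μ2
  have hθ0 : 0 < θ := hθ.1
  have hθ1 : θ < 1 := hθ.2
  have hθne : θ ≠ 0 := ne_of_gt hθ0
  have hD0 : (0:ℝ) < 1 - θ + θ ^ 2 * α₂ := by
    have := mul_pos (pow_pos hθ0 2) hα₂; nlinarith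
  have hD0ne : (1 - θ + θ ^ 2 * α₂ : ℝ) ≠ 0 := ne_of_gt hD0
  have hDdef : D = 1 - θ + θ ^ 2 * α₂ := rfl
  have hDne : D ≠ 0 := by rw [hDdef]; exact hD0ne
  have hcond : Cond (μ1, μ2) := by
    constructor
    · ext i j
      fin_cases i <;> fin_cases j <;>
        simp [Pmat, μ1, μ2, D, vecMulVec_apply, -cons_vecMulVec, e1, Matrix.one_apply, Matrix.add_apply,
          Matrix.smul_apply, Matrix.vecHead, Matrix.vecTail, Function.comp] <;>
        field_simp <;> ring
    · funext j
      fin_cases j <;>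
        simp [Pmat, μ1, μ2, D, σ1, σ2, crossMat, e1, e3, Matrix.vecMul, dotProduct,
          Fin.sum_univ_three, Matrix.mul_apply, vecMulVec_apply, -cons_vecMulVec, Matrix.one_apply,
          Matrix.add_apply, Matrix.smul_apply, Matrix.vecHead, Matrix.vecTail,
          Function.comp] <;> field_simp <;> ring
  refine ⟨⟨(μ1, μ2), hcond, ?_⟩, hcond, ?_, ?_, ?_⟩
  · rintro ⟨x, y⟩ ⟨h1, h2⟩
    have e10 := congrFun (congrFun h1 0) 0
    have e11 := congrFun (congrFun h1 0) 1
    have e12 := congrFun (congrFun h1 0) 2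
    have e20 := congrFun h2 0
    have e21 := congrFun h2 1
    have e22 := congrFun h2 2
    simp [Pmat, σ1, σ2, crossMat, e1, e3, Matrix.vecMul, dotProduct, Fin.sum_univ_three,
      Matrix.mul_apply, vecMulVec_apply, -cons_vecMulVec, Matrix.one_apply, Matrix.add_apply, Matrix.smul_apply,
      Matrix.vecHead, Matrix.vecTail, Function.comp] at e10 e11 e12 e20 e21 e22
    have hx0 : x 0 * (1 - θ + θ ^ 2 * α₂) = (1 - θ) * (θ * α₂ - 1) := by
      linear_combination (norm := (field_simp; ring)) (θ * α₂) * e10 + ((1 - θ) * θ) * e20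
    have hx1 : x 1 * (1 - θ + θ ^ 2 * α₂) = (1 - θ) * ((1 - θ) * t) := by
      linear_combination (norm := (field_simp; ring)) (θ * α₂) * e11 + ((1 - θ) * θ) * e21
    have hx2 : x 2 * (1 - θ + θ ^ 2 * α₂) = 0 := by
      linear_combination (norm := (field_simp; ring)) (θ * α₂) * e12 + ((1 - θ) * θ) * e22
    have hy0 : y 0 * (1 - θ + θ ^ 2 * α₂) = -(θ * (θ * α₂ - 1)) := by
      linear_combination (norm := (field_simp; ring)) e10 - (θ * θ) * e20
    have hy1 : y 1 * (1 - θ + θ ^ 2 * α₂) = -(θ * ((1 - θ) * t)) := by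
      linear_combination (norm := (field_simp; ring)) e11 - (θ * θ) * e21
    have hy2 : y 2 * (1 - θ + θ ^ 2 * α₂) = 0 := by
      linear_combination (norm := (field_simp; ring)) e12 - (θ * θ) * e22
    have hx : x = μ1 := by
      funext j
      fin_cases j
      · show x 0 = μ1 0
        rw [show μ1 0 = ((1 - θ) * (θ * α₂ - 1)) / (1 - θ + θ ^ 2 * α₂) by
          simp [μ1, D]; ring, eq_div_iff hD0ne]
        linear_combination hx0
      · show x 1 = μ1 1
        rw [show μ1 1 = ((1 - θ) * ((1 - θ) * t)) / (1 - θ + θ ^ 2 * α₂) by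
          simp [μ1, D]; ring, eq_div_iff hD0ne]
        linear_combination hx1
      · show x 2 = μ1 2
        rw [show μ1 2 = 0 by simp [μ1, D]]
        exact (mul_eq_zero.mp hx2).resolve_right hD0ne
    have hy : y = μ2 := by
      funext j
      fin_cases j
      · show y 0 = μ2 0
        rw [show μ2 0 = (-(θ * (θ * α₂ - 1))) / (1 - θ + θ ^ 2 * α₂) by
          simp [μ2, D]; ring, eq_div_iff hD0ne]
        linear_combination hy0
      · show y 1 = μ2 1
        rw [show μ2 1 = (-(θ * ((1 - θ) * t))) / (1 - θ + θ ^ 2 * α₂) by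
          simp [μ2, D]; ring, eq_div_iff hD0ne]
        linear_combination hy1
      · show y 2 = μ2 2
        rw [show μ2 2 = 0 by simp [μ2, D]]
        exact (mul_eq_zero.mp hy2).resolve_right hD0ne
    simp only [Prod.mk.injEq]
    exact ⟨hx, hy⟩
  · ext i j
    fin_cases i <;> fin_cases j <;>
      simp [Pmat, μ1, B, D, vecMulVec_apply, -cons_vecMulVec, e1, Matrix.one_apply, Matrix.add_apply,
        Matrix.smul_apply, Matrix.vecHead, Matrix.vecTail, Function.comp]
  · ext i j
    fin_cases i <;> fin_cases j <;>
      simp [Pmat, μ2, B, D, vecMulVec_apply, -cons_vecMulVec, e1, Matrix.one_apply, Matrix.add_apply,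
        Matrix.sub_apply, Matrix.smul_apply, Matrix.vecHead, Matrix.vecTail, Function.comp] <;>
      ring
  · ext i j
    fin_cases i <;> fin_cases j <;>
      simp [Pmat, μ1, μ2, D, σ1, σ2, crossMat, e1, e3, Fin.sum_univ_three, Matrix.mul_apply,
        vecMulVec_apply, -cons_vecMulVec, Matrix.one_apply, Matrix.add_apply, Matrix.smul_apply, Matrix.vecHead,
        Matrix.vecTail, Function.comp] <;>
      field_simp <;> ring
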